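/- The spread of the double wheel graph (K_1 ∪ K_1) ∨ C_{n−2} equals √(8n−12): its largest eigenvalue is 1 + √(8n−12)/2 and its smallest eigenvalue is 1 − √(8n−12)/2 (for n sufficiently large, e.g. n ≥ 7). -/

import Mathlib

open SimpleGraph Matrix

/-- Disjoint union of paths `P_{L 0}, …, P_{L (r-1)}`. -/
def pathsUnion (r : ℕ) (L : Fin r → ℕ) : SimpleGraph (Σ i, Fin (L i)) where
  Adj x y := x.1 = y.1 ∧ ((x.2 : ℕ) + 1 = (y.2 : ℕ) ∨ (y.2 : ℕ) + 1 = (x.2 : ℕ))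
  symm := ⟨by rintro x y ⟨h1, h2⟩; exact ⟨h1.symm, h2.symm⟩⟩
  loopless := ⟨by rintro x ⟨-, h | h⟩ <;> omega⟩

/-- Join of a graph with one new vertex (`K₁ ∨ F`), center `none`. -/
def cone {V : Type*} (F : SimpleGraph V) : SimpleGraph (Option V) where
  Adj x y := match x, y with
    | none, none => False
    | none, some _ => True
    | some _, none => True
    | some a, some b => F.Adj a b
  symm := ⟨by rintro (_ | a) (_ | b) h <;> simp_all <;> exact h.symm⟩
  loopless := ⟨by rintro (_ | a) h <;> simp_all⟩

/-- Join of two graphs. -/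
def gJoin {α β : Type*} (G : SimpleGraph α) (H : SimpleGraph β) : SimpleGraph (α ⊕ β) where
  Adj x y := match x, y with
    | .inl a, .inl b => G.Adj a b
    | .inr a, .inr b => H.Adj a b
    | _, _ => True
  symm := ⟨by rintro (a | a) (b | b) h <;> simp_all <;> exact h.symm⟩
  loopless := ⟨by rintro (a | a) h <;> simp_all⟩

/-- Cycle graph on `m` vertices. -/
def cycleG (m : ℕ) : SimpleGraph (Fin m) where
  Adj x y := x ≠ y ∧ (((x : ℕ) + 1) % m = (y : ℕ) ∨ ((y : ℕ) + 1) % m = (x : ℕ))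
  symm := ⟨by rintro x y ⟨h1, h2⟩; exact ⟨h1.symm, h2.symm⟩⟩
  loopless := ⟨by rintro x ⟨h, -⟩; exact h rfl⟩

/-- Real adjacency matrix of a graph. -/
noncomputable def adjMat {V : Type*} (G : SimpleGraph V) : Matrix V V ℝ :=
  letI := Classical.decRel G.Adj
  G.adjMatrix ℝ

/-- Largest adjacency eigenvalue. -/
noncomputable def maxEig {V : Type*} [Fintype V] [DecidableEq V] (G : SimpleGraph V) : ℝ :=
  sSup (spectrum ℝ (adjMat G))

/-- Smallest adjacency eigenvalue. -/
noncomputable def minEig {V : Type*} [Fintype V] [DecidableEq V] (G : SimpleGraph V) : ℝ :=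
  sInf (spectrum ℝ (adjMat G))

/-- Spread of a graph. -/
noncomputable def gspread {V : Type*} [Fintype V] [DecidableEq V] (G : SimpleGraph V) : ℝ :=
  maxEig G - minEig G

/-- Adjacency matrix of the path on `m` vertices. -/
def pathMatrix (m : ℕ) : Matrix (Fin m) (Fin m) ℝ :=
  Matrix.of fun a b => if (a : ℕ) + 1 = (b : ℕ) ∨ (b : ℕ) + 1 = (a : ℕ) then 1 else 0

/-- `H` is a minor of `G`. -/
def HasMinor {V W : Type*} (G : SimpleGraph V) (H : SimpleGraph W) : Prop :=
  ∃ B : W → Set V, (∀ w, (B w).Nonempty) ∧ (Pairwise fun a b => Disjoint (B a) (B b)) ∧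
    (∀ w, (G.induce (B w)).Connected) ∧
    (∀ ⦃a b⦄, H.Adj a b → ∃ u ∈ B a, ∃ v ∈ B b, G.Adj u v)

/-- Planarity via Wagner's theorem: no `K₅` and no `K_{3,3}` minor. -/
def IsPlanar {V : Type*} (G : SimpleGraph V) : Prop :=
  ¬ HasMinor G (⊤ : SimpleGraph (Fin 5)) ∧
  ¬ HasMinor G (completeBipartiteGraph (Fin 3) (Fin 3))

/-- Outerplanarity: no `K₄` and no `K_{2,3}` minor. -/
def IsOuterplanar {V : Type*} (G : SimpleGraph V) : Prop :=
  ¬ HasMinor G (⊤ : SimpleGraph (Fin 4)) ∧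
  ¬ HasMinor G (completeBipartiteGraph (Fin 2) (Fin 3))

lemma adjMat_apply {V : Type*} (G : SimpleGraph V) (i j : V) [Decidable (G.Adj i j)] :
    adjMat G i j = if G.Adj i j then 1 else 0 := by
  unfold adjMat
  rw [SimpleGraph.adjMatrix_apply]
  congr

lemma modfact1 (m k : ℕ) (hk : k < m) : (k+1)%m = k+1 ∨ ((k+1 = m) ∧ (k+1)%m = 0) := by
  rcases Nat.lt_or_ge (k+1) m with h | h
  · exact Or.inl (Nat.mod_eq_of_lt h)
  · exact Or.inr ⟨by omega, by rw [show k+1 = m by omega, Nat.mod_self]⟩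

lemma modfact2 (m k : ℕ) (hm : 1 ≤ m) (hk : k < m) :
    (k = 0 ∧ (k+(m-1))%m = m-1) ∨ (1 ≤ k ∧ (k+(m-1))%m = k-1) := by
  rcases Nat.eq_zero_or_pos k with h | h
  · exact Or.inl ⟨h, by rw [h, Nat.zero_add]; exact Nat.mod_eq_of_lt (by omega)⟩
  · refine Or.inr ⟨h, ?_⟩
    rw [show k+(m-1) = m + (k-1) by omega, Nat.add_mod_left]
    exact Nat.mod_eq_of_lt (by omega)

theorem cycle_adj_iff {m : ℕ} [NeZero m] (hm : 3 ≤ m) (j b : Fin m) :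
    (cycleG m).Adj j b ↔ b = j + 1 ∨ b = j - 1 := by
  have hj := j.isLt; have hb := b.isLt
  have v1 : ((1 : Fin m) : ℕ) = 1 := by
    rw [Fin.val_one']; exact Nat.mod_eq_of_lt (by omega)
  have e1 : ((j + 1 : Fin m) : ℕ) = ((j : ℕ) + 1) % m := by
    rw [Fin.add_def, v1]
  have e2 : ((j - 1 : Fin m) : ℕ) = ((j : ℕ) + (m - 1)) % m := by
    rw [Fin.sub_def]
    show (m - ((1 : Fin m):ℕ) + (j:ℕ)) % m = ((j:ℕ) + (m-1)) % m
    rw [v1]; congr 1; omega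
  have key : (cycleG m).Adj j b ↔
      (j ≠ b ∧ (((j : ℕ) + 1) % m = (b : ℕ) ∨ ((b : ℕ) + 1) % m = (j : ℕ))) := Iff.rfl
  rw [key, Fin.ext_iff, Fin.ext_iff, e1, e2, Fin.ne_iff_vne]
  have h1 := modfact1 m j hj
  have h2 := modfact1 m b hb
  have h3 := modfact2 m j (by omega) hj
  have bA : ((j:ℕ)+1)%m < m := Nat.mod_lt _ (by omega)
  have bB : ((b:ℕ)+1)%m < m := Nat.mod_lt _ (by omega)
  have bC : ((j:ℕ)+(m-1))%m < m := Nat.mod_lt _ (by omega)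
  generalize hA : ((j:ℕ)+1)%m = A at h1 bA ⊢
  generalize hB : ((b:ℕ)+1)%m = B at h2 bB ⊢
  generalize hC : ((j:ℕ)+(m-1))%m = C at h3 bC ⊢
  clear key e1 e2 v1 hA hB hC
  omega

lemma succ_ne_pred {m : ℕ} [NeZero m] (hm : 3 ≤ m) (j : Fin m) : j + 1 ≠ j - 1 := by
  have h := (cycle_adj_iff hm j j).not
  intro hcontra
  have hadj : ¬ (cycleG m).Adj j j := (cycleG m).loopless.irrefl j
  -- direct: show vals differ
  have hj := j.isLt
  have v1 : ((1 : Fin m) : ℕ) = 1 := by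
    rw [Fin.val_one']; exact Nat.mod_eq_of_lt (by omega)
  have e1 : ((j + 1 : Fin m) : ℕ) = ((j : ℕ) + 1) % m := by rw [Fin.add_def, v1]
  have e2 : ((j - 1 : Fin m) : ℕ) = ((j : ℕ) + (m - 1)) % m := by
    rw [Fin.sub_def]
    show (m - ((1 : Fin m):ℕ) + (j:ℕ)) % m = ((j:ℕ) + (m-1)) % m
    rw [v1]; congr 1; omega
  have := congrArg Fin.val hcontra
  rw [e1, e2] at this
  have h1 := modfact1 m j hj
  have h3 := modfact2 m j (by omega) hj
  generalize hA : ((j:ℕ)+1)%m = A at h1 this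
  generalize hC : ((j:ℕ)+(m-1))%m = C at h3 this
  omega

lemma gJoin_adj_ll {α β : Type*} (G : SimpleGraph α) (H : SimpleGraph β) (a b : α) :
    (gJoin G H).Adj (.inl a) (.inl b) ↔ G.Adj a b := Iff.rfl
lemma gJoin_adj_lr {α β : Type*} (G : SimpleGraph α) (H : SimpleGraph β) (a : α) (b : β) :
    (gJoin G H).Adj (.inl a) (.inr b) ↔ True := Iff.rfl
lemma gJoin_adj_rl {α β : Type*} (G : SimpleGraph α) (H : SimpleGraph β) (a : β) (b : α) :
    (gJoin G H).Adj (.inr a) (.inl b) ↔ True := Iff.rfl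
lemma gJoin_adj_rr {α β : Type*} (G : SimpleGraph α) (H : SimpleGraph β) (a b : β) :
    (gJoin G H).Adj (.inr a) (.inr b) ↔ H.Adj a b := Iff.rfl

lemma cycle_filter {m : ℕ} [NeZero m] (hm : 3 ≤ m) (j : Fin m)
    [DecidablePred ((cycleG m).Adj j)] :
    Finset.univ.filter (fun b => (cycleG m).Adj j b) = {j+1, j-1} := by
  ext b
  simp only [Finset.mem_filter, Finset.mem_univ, true_and, Finset.mem_insert,
    Finset.mem_singleton, cycle_adj_iff hm]

lemma cycle_sum {m : ℕ} [NeZero m] (hm : 3 ≤ m) (j : Fin m) (x : Fin m → ℝ)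
    [DecidablePred ((cycleG m).Adj j)] :
    ∑ b, (if (cycleG m).Adj j b then x b else 0) = x (j+1) + x (j-1) := by
  rw [← Finset.sum_filter, cycle_filter hm j,
    Finset.sum_insert (by simp [succ_ne_pred hm j]), Finset.sum_singleton]

lemma mulVec_inl {m : ℕ} [NeZero m] (hm : 3 ≤ m) (v : Fin 2 ⊕ Fin m → ℝ) (i : Fin 2) :
    (adjMat (gJoin (⊥ : SimpleGraph (Fin 2)) (cycleG m)) *ᵥ v) (Sum.inl i) =
      ∑ b : Fin m, v (Sum.inr b) := by
  classical
  simp only [Matrix.mulVec, dotProduct, Fintype.sum_sum_type, adjMat_apply,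
    gJoin_adj_ll, gJoin_adj_lr, SimpleGraph.bot_adj, if_false, if_true, iff_true,
    zero_mul, one_mul, Finset.sum_const_zero, zero_add]

lemma mulVec_inr {m : ℕ} [NeZero m] (hm : 3 ≤ m) (v : Fin 2 ⊕ Fin m → ℝ) (j : Fin m) :
    (adjMat (gJoin (⊥ : SimpleGraph (Fin 2)) (cycleG m)) *ᵥ v) (Sum.inr j) =
      (v (Sum.inl 0) + v (Sum.inl 1)) + (v (Sum.inr (j+1)) + v (Sum.inr (j-1))) := by
  classical
  simp only [Matrix.mulVec, dotProduct, Fintype.sum_sum_type, adjMat_apply,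
    gJoin_adj_rl, gJoin_adj_rr, if_true, iff_true, one_mul]
  rw [Fin.sum_univ_two]
  congr 1
  have : ∀ b : Fin m, (if (cycleG m).Adj j b then (1:ℝ) else 0) * v (Sum.inr b) =
      (if (cycleG m).Adj j b then v (Sum.inr b) else 0) := by
    intro b; split <;> simp
  rw [Finset.sum_congr rfl (fun b _ => this b)]
  exact cycle_sum hm j (fun b => v (Sum.inr b))
lemma abstract_ineq (M t c Sy2 Py na2 r : ℝ) (hM : 5 ≤ M)
    (hr0 : 0 ≤ r) (hr2 : r^2 = 2*M+1)
    (hPy1 : Py ≤ Sy2) (hPy2 : -Sy2 ≤ Py) (ht : t^2 ≤ 2*na2) :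
    (1-r)*(na2 + M*c^2 + Sy2) ≤ 2*t*(M*c) + 2*(M*c^2) + 2*Py ∧
    2*t*(M*c) + 2*(M*c^2) + 2*Py ≤ (1+r)*(na2 + M*c^2 + Sy2) := by
  have hr3 : 3 ≤ r := by nlinarith
  have hS : 0 ≤ Sy2 := by linarith
  constructor
  · have e : 2*(r-1)*((2*t*(M*c) + 2*(M*c^2) + 2*Py) - (1-r)*(na2 + M*c^2 + Sy2))
        = ((r-1)*t+2*M*c)^2 + (r-1)^2*(2*na2-t^2) + 2*(r-1)*((r-3)*Sy2 + 2*(Sy2+Py)) := by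
      linear_combination (2*M*c^2)*hr2
    have hD : 0 ≤ 2*(r-1) * ((2*t*(M*c) + 2*(M*c^2) + 2*Py) - (1-r)*(na2 + M*c^2 + Sy2)) := by
      rw [e]
      have t1 : 0 ≤ ((r-1)*t+2*M*c)^2 := sq_nonneg _
      have t2 : 0 ≤ (r-1)^2*(2*na2-t^2) := mul_nonneg (sq_nonneg _) (by linarith)
      have t3 : 0 ≤ 2*(r-1)*((r-3)*Sy2 + 2*(Sy2+Py)) := by
        have h1 := mul_nonneg (show 0 ≤ r-3 by linarith) hS
        apply mul_nonneg (by linarith); linarith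
      linarith
    nlinarith [hD]
  · have e : 2*(1+r)*((1+r)*(na2 + M*c^2 + Sy2) - (2*t*(M*c) + 2*(M*c^2) + 2*Py))
        = ((1+r)*t-2*M*c)^2 + (1+r)^2*(2*na2-t^2) + 2*(1+r)*((r-1)*Sy2 + 2*(Sy2-Py)) := by
      linear_combination (2*M*c^2)*hr2
    have hD : 0 ≤ 2*(1+r)*((1+r)*(na2 + M*c^2 + Sy2) - (2*t*(M*c) + 2*(M*c^2) + 2*Py)) := by
      rw [e]
      have t1 : 0 ≤ ((1+r)*t-2*M*c)^2 := sq_nonneg _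
      have t2 : 0 ≤ (1+r)^2*(2*na2-t^2) := mul_nonneg (sq_nonneg _) (by linarith)
      have t3 : 0 ≤ 2*(1+r)*((r-1)*Sy2 + 2*(Sy2-Py)) := by
        have h1 := mul_nonneg (show 0 ≤ r-1 by linarith) hS
        apply mul_nonneg (by linarith); linarith
      linarith
    nlinarith [hD]

lemma sum_shift {m : ℕ} [NeZero m] (f : Fin m → ℝ) : (∑ j, f (j+1)) = ∑ j, f j :=
  Fintype.sum_equiv (Equiv.addRight (1:Fin m)) _ f (fun _ => rfl)

lemma quad_formula {m : ℕ} [NeZero m] (hm : 3 ≤ m) (v : Fin 2 ⊕ Fin m → ℝ) :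
    v ⬝ᵥ (adjMat (gJoin (⊥ : SimpleGraph (Fin 2)) (cycleG m)) *ᵥ v) =
      2*(v (Sum.inl 0) + v (Sum.inl 1))*(∑ j, v (Sum.inr j)) +
      2*(∑ j, v (Sum.inr j) * v (Sum.inr (j+1))) := by
  classical
  rw [dotProduct, Fintype.sum_sum_type]
  have e1 : ∀ i, (adjMat (gJoin (⊥ : SimpleGraph (Fin 2)) (cycleG m)) *ᵥ v) (Sum.inl i) =
      ∑ b : Fin m, v (Sum.inr b) := mulVec_inl hm v
  have e2 : ∀ j, (adjMat (gJoin (⊥ : SimpleGraph (Fin 2)) (cycleG m)) *ᵥ v) (Sum.inr j) =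
      (v (Sum.inl 0) + v (Sum.inl 1)) + (v (Sum.inr (j+1)) + v (Sum.inr (j-1))) :=
    mulVec_inr hm v
  simp only [e1, e2]
  rw [Fin.sum_univ_two]
  have h1 : ∑ j : Fin m, v (Sum.inr j) *
        ((v (Sum.inl 0) + v (Sum.inl 1)) + (v (Sum.inr (j+1)) + v (Sum.inr (j-1))))
      = (v (Sum.inl 0) + v (Sum.inl 1)) * (∑ j, v (Sum.inr j)) +
        ((∑ j, v (Sum.inr j) * v (Sum.inr (j+1))) +
         (∑ j, v (Sum.inr j) * v (Sum.inr (j-1)))) := by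
    rw [Finset.mul_sum, ← Finset.sum_add_distrib, ← Finset.sum_add_distrib]
    apply Finset.sum_congr rfl
    intro j _; ring
  rw [h1]
  have h2 : (∑ j : Fin m, v (Sum.inr j) * v (Sum.inr (j-1)))
      = ∑ j : Fin m, v (Sum.inr j) * v (Sum.inr (j+1)) := by
    rw [← sum_shift (fun j => v (Sum.inr j) * v (Sum.inr (j-1)))]
    apply Finset.sum_congr rfl
    intro j _
    simp only [add_sub_cancel_right]
    ring
  rw [h2]; ring

lemma quad_bounds {m : ℕ} [NeZero m] (hm : 5 ≤ m) (v : Fin 2 ⊕ Fin m → ℝ) :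
    (1 - Real.sqrt (2*m+1)) * (v ⬝ᵥ v) ≤
      v ⬝ᵥ (adjMat (gJoin (⊥ : SimpleGraph (Fin 2)) (cycleG m)) *ᵥ v) ∧
    v ⬝ᵥ (adjMat (gJoin (⊥ : SimpleGraph (Fin 2)) (cycleG m)) *ᵥ v) ≤
      (1 + Real.sqrt (2*m+1)) * (v ⬝ᵥ v) := by
  classical
  have hm0 : (0:ℝ) < m := by
    have := Nat.pos_of_ne_zero (NeZero.ne m); exact_mod_cast this
  set x : Fin m → ℝ := fun j => v (Sum.inr j) with hx
  set a0 := v (Sum.inl 0) with ha0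
  set a1 := v (Sum.inl 1) with ha1
  set c : ℝ := (∑ j, x j) / m with hc
  set y : Fin m → ℝ := fun j => x j - c with hy
  have hS : (∑ j, x j) = m * c := by rw [hc]; field_simp
  have hsum_y : (∑ j, y j) = 0 := by
    simp only [hy, Finset.sum_sub_distrib, Finset.sum_const, Finset.card_univ,
      Fintype.card_fin, nsmul_eq_mul, hS]
    ring
  have hyshift : (∑ j, y (j+1)) = 0 := by rw [sum_shift]; exact hsum_y
  have hx2 : (∑ j, x j * x j) = m * c^2 + (∑ j, y j * y j) := by
    have : ∀ j, x j * x j = y j * y j + 2*c*(y j) + c^2 := by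
      intro j; simp only [hy]; ring
    rw [Finset.sum_congr rfl (fun j _ => this j), Finset.sum_add_distrib,
      Finset.sum_add_distrib, ← Finset.mul_sum, hsum_y, Finset.sum_const,
      Finset.card_univ, Fintype.card_fin, nsmul_eq_mul]
    ring
  have hP : (∑ j, x j * x (j+1)) = m * c^2 + (∑ j, y j * y (j+1)) := by
    have : ∀ j, x j * x (j+1) = y j * y (j+1) + c*(y j) + c*(y (j+1)) + c^2 := by
      intro j; simp only [hy]; ring
    rw [Finset.sum_congr rfl (fun j _ => this j), Finset.sum_add_distrib,
      Finset.sum_add_distrib, Finset.sum_add_distrib, ← Finset.mul_sum, ← Finset.mul_sum,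
      hsum_y, hyshift, Finset.sum_const, Finset.card_univ, Fintype.card_fin, nsmul_eq_mul]
    ring
  have hy2shift : (∑ j, y (j+1) * y (j+1)) = ∑ j, y j * y j :=
    sum_shift (fun j => y j * y j)
  have hPy1 : (∑ j, y j * y (j+1)) ≤ ∑ j, y j * y j := by
    have h0 : (0:ℝ) ≤ ∑ j, (y j - y (j+1)) * (y j - y (j+1)) :=
      Finset.sum_nonneg (fun j _ => mul_self_nonneg _)
    have hexp : (∑ j, (y j - y (j+1)) * (y j - y (j+1)))
        = (∑ j, y j * y j) + (∑ j, y (j+1) * y (j+1)) - 2*(∑ j, y j * y (j+1)) := by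
      have hterm : ∀ j : Fin m, (y j - y (j+1)) * (y j - y (j+1)) =
          y j * y j + y (j+1) * y (j+1) - 2*(y j * y (j+1)) := fun j => by ring
      rw [Finset.sum_congr rfl (fun j _ => hterm j), Finset.sum_sub_distrib,
        Finset.sum_add_distrib, ← Finset.mul_sum]
    rw [hexp, hy2shift] at h0; linarith
  have hPy2 : -(∑ j, y j * y j) ≤ ∑ j, y j * y (j+1) := by
    have h0 : (0:ℝ) ≤ ∑ j, (y j + y (j+1)) * (y j + y (j+1)) :=
      Finset.sum_nonneg (fun j _ => mul_self_nonneg _)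
    have hexp : (∑ j, (y j + y (j+1)) * (y j + y (j+1)))
        = (∑ j, y j * y j) + (∑ j, y (j+1) * y (j+1)) + 2*(∑ j, y j * y (j+1)) := by
      have hterm : ∀ j : Fin m, (y j + y (j+1)) * (y j + y (j+1)) =
          y j * y j + y (j+1) * y (j+1) + 2*(y j * y (j+1)) := fun j => by ring
      rw [Finset.sum_congr rfl (fun j _ => hterm j), Finset.sum_add_distrib,
        Finset.sum_add_distrib, ← Finset.mul_sum]
    rw [hexp, hy2shift] at h0; linarith
  have hvv : v ⬝ᵥ v = (a0*a0 + a1*a1) + ∑ j, x j * x j := by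
    rw [dotProduct, Fintype.sum_sum_type, Fin.sum_univ_two]
  have hQ := quad_formula (by omega) v
  have ht : (a0+a1)^2 ≤ 2*(a0*a0 + a1*a1) := by nlinarith [sq_nonneg (a0 - a1)]
  have habs := abstract_ineq (m:ℝ) (a0+a1) c (∑ j, y j * y j) (∑ j, y j * y (j+1))
    (a0*a0 + a1*a1) (Real.sqrt (2*m+1)) (by exact_mod_cast hm) (Real.sqrt_nonneg _)
    (Real.sq_sqrt (by positivity)) hPy1 hPy2 ht
  rw [hQ, hvv, hS, hP, hx2]
  constructor
  · have := habs.1; nlinarith [this]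
  · have := habs.2; nlinarith [this]

theorem spec_iff {V : Type*} [Fintype V] [DecidableEq V] (A : Matrix V V ℝ) (μ : ℝ) :
    μ ∈ spectrum ℝ A ↔ ∃ v : V → ℝ, v ≠ 0 ∧ A *ᵥ v = μ • v := by
  rw [spectrum.mem_iff, Matrix.isUnit_iff_isUnit_det, isUnit_iff_ne_zero, not_not,
    ← Matrix.exists_mulVec_eq_zero_iff]
  have h2 : ∀ v : V → ℝ, (algebraMap ℝ (Matrix V V ℝ)) μ *ᵥ v = μ • v := by
    intro v; simp [Matrix.algebraMap_eq_diagonal, Matrix.diagonal_mulVec_single]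
    ext i; simp [Matrix.mulVec, Matrix.diagonal, dotProduct, Finset.sum_ite_eq]
  constructor
  · rintro ⟨v, hv, h⟩
    refine ⟨v, hv, ?_⟩
    rw [Matrix.sub_mulVec, h2, sub_eq_zero] at h
    exact h.symm
  · rintro ⟨v, hv, h⟩
    exact ⟨v, hv, by rw [Matrix.sub_mulVec, h2, h, sub_self]⟩

lemma eig_mem {m : ℕ} [NeZero m] (hm : 5 ≤ m) (lam : ℝ) (hlam : lam * (lam - 2) = 2*m) :
    lam ∈ spectrum ℝ (adjMat (gJoin (⊥ : SimpleGraph (Fin 2)) (cycleG m))) := by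
  rw [spec_iff]
  refine ⟨Sum.elim (fun _ => (lam-2)/2) (fun _ => 1), ?_, ?_⟩
  · intro h
    have := congrFun h (Sum.inr ⟨0, by omega⟩)
    simp at this
  · funext i
    cases i with
    | inl i =>
        rw [mulVec_inl (by omega)]
        simp only [Sum.elim_inr, Sum.elim_inl, Pi.smul_apply, smul_eq_mul,
          Finset.sum_const, Finset.card_univ, Fintype.card_fin, nsmul_eq_mul, mul_one]
        rw [show lam * ((lam-2)/2) = lam * (lam - 2) / 2 by ring, hlam]
        ring
    | inr j =>
        rw [mulVec_inr (by omega)]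
        simp only [Sum.elim_inr, Sum.elim_inl, Pi.smul_apply, smul_eq_mul, mul_one]
        ring

lemma dot_self_pos {V : Type*} [Fintype V] (v : V → ℝ) (hv : v ≠ 0) : 0 < v ⬝ᵥ v := by
  rw [dotProduct]
  obtain ⟨i, hi⟩ := Function.ne_iff.mp hv
  exact Finset.sum_pos' (fun j _ => mul_self_nonneg _)
    ⟨i, Finset.mem_univ i, mul_self_pos.2 (by simpa using hi)⟩

theorem spec_main {m : ℕ} [NeZero m] (hm : 5 ≤ m) :
    sSup (spectrum ℝ (adjMat (gJoin (⊥ : SimpleGraph (Fin 2)) (cycleG m)))) =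
      1 + Real.sqrt (2*m+1) ∧
    sInf (spectrum ℝ (adjMat (gJoin (⊥ : SimpleGraph (Fin 2)) (cycleG m)))) =
      1 - Real.sqrt (2*m+1) := by
  set r := Real.sqrt (2*(m:ℝ)+1) with hr
  have hr2 : r^2 = 2*m+1 := Real.sq_sqrt (by positivity)
  have hmemp : (1+r) ∈ spectrum ℝ (adjMat (gJoin (⊥ : SimpleGraph (Fin 2)) (cycleG m))) :=
    eig_mem hm _ (by rw [show (1+r)*(1+r-2) = r^2 - 1 by ring, hr2]; ring)
  have hmemm : (1-r) ∈ spectrum ℝ (adjMat (gJoin (⊥ : SimpleGraph (Fin 2)) (cycleG m))) :=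
    eig_mem hm _ (by rw [show (1-r)*(1-r-2) = r^2 - 1 by ring, hr2]; ring)
  have hub : ∀ μ ∈ spectrum ℝ (adjMat (gJoin (⊥ : SimpleGraph (Fin 2)) (cycleG m))),
      1 - r ≤ μ ∧ μ ≤ 1 + r := by
    intro μ hμ
    obtain ⟨v, hv, heig⟩ := (spec_iff _ μ).mp hμ
    have hQ : v ⬝ᵥ (adjMat (gJoin (⊥ : SimpleGraph (Fin 2)) (cycleG m)) *ᵥ v)
        = μ * (v ⬝ᵥ v) := by
      rw [heig, dotProduct_smul, smul_eq_mul]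
    have hb := quad_bounds hm v
    rw [hQ] at hb
    have hN := dot_self_pos v hv
    constructor
    · exact le_of_mul_le_mul_right (by linarith [hb.1]) hN
    · exact le_of_mul_le_mul_right (by linarith [hb.2]) hN
  constructor
  · apply le_antisymm
    · exact csSup_le ⟨1+r, hmemp⟩ (fun μ hμ => (hub μ hμ).2)
    · exact le_csSup ⟨1+r, fun μ hμ => (hub μ hμ).2⟩ hmemp
  · apply le_antisymm
    · exact csInf_le ⟨1-r, fun μ hμ => (hub μ hμ).1⟩ hmemm
    · exact le_csInf ⟨1+r, hmemp⟩ (fun μ hμ => (hub μ hμ).1)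

theorem stmt_14 (n : ℕ) (hn : 7 ≤ n) :
    maxEig (gJoin (⊥ : SimpleGraph (Fin 2)) (cycleG (n - 2))) =
        1 + Real.sqrt (8 * (n : ℝ) - 12) / 2 ∧
    minEig (gJoin (⊥ : SimpleGraph (Fin 2)) (cycleG (n - 2))) =
        1 - Real.sqrt (8 * (n : ℝ) - 12) / 2 ∧
    gspread (gJoin (⊥ : SimpleGraph (Fin 2)) (cycleG (n - 2))) =
        Real.sqrt (8 * (n : ℝ) - 12) := by
  haveI : NeZero (n - 2) := ⟨by omega⟩
  have hm : 5 ≤ n - 2 := by omega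
  have hcast : ((n - 2 : ℕ) : ℝ) = (n : ℝ) - 2 := by
    rw [Nat.cast_sub (by omega)]; norm_num
  have hmain := spec_main (m := n - 2) hm
  have hsq : Real.sqrt (8 * (n : ℝ) - 12) / 2 = Real.sqrt (2 * ((n - 2 : ℕ) : ℝ) + 1) := by
    rw [hcast, show (8 * (n:ℝ) - 12) = 2^2 * (2 * ((n:ℝ) - 2) + 1) by ring,
      Real.sqrt_mul (by positivity), Real.sqrt_sq (by norm_num)]
    ring
  have h1 : maxEig (gJoin (⊥ : SimpleGraph (Fin 2)) (cycleG (n - 2))) =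
      1 + Real.sqrt (8 * (n : ℝ) - 12) / 2 := by
    show sSup _ = _
    rw [hmain.1, hsq]
  have h2 : minEig (gJoin (⊥ : SimpleGraph (Fin 2)) (cycleG (n - 2))) =
      1 - Real.sqrt (8 * (n : ℝ) - 12) / 2 := by
    show sInf _ = _
    rw [hmain.2, hsq]
  refine ⟨h1, h2, ?_⟩
  show maxEig _ - minEig _ = _
  rw [h1, h2]; ring
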